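/- Let k be a field of characteristic 0 with algebraic closure k̄, let n ≥ 6, and let F, G be quadratic forms in n + 1 variables over k with rank(F) = n + 1. Then the set {λ ∈ k̄ : rank(F + λG) ≤ 4} has at most two elements, and if it has exactly two elements then n = 6 or n = 7. -/

import Mathlib

section AuxStmt18
open Polynomial Matrix

lemma aux_card_mul_le {K : Type*} [Field K] (P : K[X]) (hP : P ≠ 0)
    (t : Finset K) (c : ℕ) (hc : 0 < c) (h : ∀ a ∈ t, c ≤ P.rootMultiplicity a) :
    t.card * c ≤ P.natDegree := by
  classical
  have hsub : t ⊆ P.roots.toFinset := by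
    intro a ha
    rw [Multiset.mem_toFinset, ← Multiset.count_pos, Polynomial.count_roots]
    exact lt_of_lt_of_le hc (h a ha)
  calc t.card * c = ∑ _a ∈ t, c := by rw [Finset.sum_const, smul_eq_mul]
    _ ≤ ∑ a ∈ t, P.roots.count a :=
        Finset.sum_le_sum (fun a ha => by rw [Polynomial.count_roots]; exact h a ha)
    _ ≤ ∑ a ∈ P.roots.toFinset, P.roots.count a := Finset.sum_le_sum_of_subset hsub
    _ = Multiset.card P.roots := Multiset.toFinset_sum_count_eq _
    _ ≤ P.natDegree := Polynomial.card_roots' P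

lemma aux_det_ne_zero {K : Type*} [Field K] {m : ℕ} (M : Matrix (Fin m) (Fin m) K)
    (h : M.rank = m) : M.det ≠ 0 := by
  have h1 : LinearMap.range M.mulVecLin = ⊤ := by
    apply Submodule.eq_top_of_finrank_eq
    rw [Module.finrank_fin_fun]; exact h
  have hs : Function.Surjective M.mulVec := by
    have := LinearMap.range_eq_top.mp h1
    exact this
  have := Matrix.mulVec_surjective_iff_isUnit.mp hs
  exact ((Matrix.isUnit_iff_isUnit_det M).mp this).ne_zero

lemma aux_prod_ite {K : Type*} [Field K] {m d : ℕ} (hd : d ≤ m) :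
    (∏ j : Fin m, (if (j : ℕ) < d then (X : K[X]) else 1)) = X ^ d := by
  rw [Fin.prod_univ_eq_prod_range (fun i => if i < d then (X : K[X]) else 1) m]
  rw [Finset.prod_ite, Finset.prod_const, Finset.prod_const, one_pow, mul_one]
  congr 1
  rw [← Nat.Iio_eq_range, Finset.Iio_filter_lt, Nat.Iio_eq_range, Finset.card_range]
  omega

lemma aux_basis {K : Type*} [Field K] {m : ℕ} (M : Matrix (Fin m) (Fin m) K) :
    ∃ b : Module.Basis (Fin m) K (Fin m → K), ∀ j : Fin m, (j : ℕ) < m - M.rank → M *ᵥ b j = 0 := by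
  set p := LinearMap.ker M.mulVecLin with hp
  obtain ⟨q, hq⟩ := Submodule.exists_isCompl p
  have hfin : Module.finrank K (Fin m → K) = m := by simp
  have hrn : M.rank + Module.finrank K p = m := by
    have := LinearMap.finrank_range_add_finrank_ker M.mulVecLin
    rw [hfin] at this
    exact this
  have hd : Module.finrank K p = m - M.rank := by omega
  have hq' : Module.finrank K q = m - (m - M.rank) := by
    have := Submodule.finrank_add_eq_of_isCompl hq
    rw [hfin] at this
    omega
  set d := m - M.rank with hdd
  have hdm : d + (m - d) = m := by
    have : M.rank ≤ m := M.rank_le_card_width.trans (by simp)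
    omega
  let bp : Module.Basis (Fin d) K p := Module.finBasisOfFinrankEq K p hd
  let bq : Module.Basis (Fin (m - d)) K q := Module.finBasisOfFinrankEq K q hq'
  let e : (Fin d ⊕ Fin (m - d)) ≃ Fin m := finSumFinEquiv.trans (finCongr hdm)
  let b : Module.Basis (Fin m) K (Fin m → K) :=
    ((bp.prod bq).map (Submodule.prodEquivOfIsCompl p q hq)).reindex e
  refine ⟨b, fun j hj => ?_⟩
  have he : e (Sum.inl ⟨(j : ℕ), hj⟩) = j := by
    simp [e, Fin.ext_iff]
  have hb : b j = ((bp.prod bq).map (Submodule.prodEquivOfIsCompl p q hq))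
      (Sum.inl ⟨(j : ℕ), hj⟩) := by
    rw [Module.Basis.reindex_apply]
    congr 1
    exact e.symm_apply_eq.mpr he.symm
  have hmem : b j ∈ p := by
    rw [hb, Module.Basis.map_apply, Module.Basis.prod_apply]
    simp [Submodule.coe_prodEquivOfIsCompl]
  simpa [hp, Matrix.mulVecLin] using (LinearMap.mem_ker.mp hmem)

lemma aux_dvd {K : Type*} [Field K] {m : ℕ} (M N : Matrix (Fin m) (Fin m) K) :
    (X : K[X]) ^ (m - M.rank) ∣ ((M.map C) + (X : K[X]) • (N.map C)).det := by
  obtain ⟨b, hb⟩ := aux_basis M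
  set d := m - M.rank with hd
  have hdm : d ≤ m := Nat.sub_le m _
  set U : Matrix (Fin m) (Fin m) K := ((Pi.basisFun K (Fin m)).toMatrix ⇑b) with hU
  have hUcol : ∀ j l, b j l = U l j := by
    intro j l
    rw [hU, Module.Basis.toMatrix_apply, Pi.basisFun_repr]
  have hUdet : U.det ≠ 0 := by
    have h1 : U * (b.toMatrix ⇑(Pi.basisFun K (Fin m))) = 1 :=
      Module.Basis.toMatrix_mul_toMatrix_flip _ _
    have h2 := congrArg Matrix.det h1
    rw [Matrix.det_mul, Matrix.det_one] at h2
    intro h0; rw [h0, zero_mul] at h2; exact zero_ne_one h2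
  set P : K[X] := ((M.map C) + (X : K[X]) • (N.map C)).det with hP
  set W : Matrix (Fin m) (Fin m) K[X] := ((M.map C) + (X : K[X]) • (N.map C)) * (U.map C) with hW
  have hWdet : W.det = P * C U.det := by
    rw [hW, Matrix.det_mul, ← hP]
    congr 1
    exact ((RingHom.map_det C U).trans (by rw [RingHom.mapMatrix_apply])).symm
  have hWent : ∀ i j, W i j = C ((M *ᵥ b j) i) + X * C ((N *ᵥ b j) i) := by
    intro i j
    rw [hW, Matrix.mul_apply]
    simp only [Matrix.add_apply, Matrix.smul_apply, Matrix.map_apply, smul_eq_mul, add_mul,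
      mul_assoc]
    rw [Finset.sum_add_distrib, ← Finset.mul_sum]
    have e1 : (M *ᵥ b j) i = ∑ x, M i x * b j x := rfl
    have e2 : (N *ᵥ b j) i = ∑ x, N i x * b j x := rfl
    rw [e1, e2, map_sum, map_sum]
    congr 1
    · exact Finset.sum_congr rfl (fun x _ => by rw [C_mul, hUcol])
    · congr 1
      exact Finset.sum_congr rfl (fun x _ => by rw [C_mul, hUcol])
  have hWV : W = Matrix.of fun (i j : Fin m) =>
      (if (j : ℕ) < d then (X : K[X]) else 1) *
        (if (j : ℕ) < d then C ((N *ᵥ b j) i) else W i j) := by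
    refine Matrix.ext fun i j => ?_
    rw [Matrix.of_apply]
    by_cases hj : (j : ℕ) < d
    · rw [if_pos hj, if_pos hj, hWent i j, hb j hj]
      simp
    · rw [if_neg hj, if_neg hj, one_mul]
  have hfin : W.det = X ^ d * (Matrix.of fun (i j : Fin m) =>
      (if (j : ℕ) < d then C ((N *ᵥ b j) i) else W i j)).det := by
    conv_lhs => rw [hWV]
    refine (Matrix.det_mul_row (fun j : Fin m => if (j : ℕ) < d then (X : K[X]) else 1)
      (Matrix.of fun i j => if (j : ℕ) < d then C ((N *ᵥ b j) i) else W i j)).trans ?_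
    rw [aux_prod_ite hdm]
  rw [hWdet] at hfin
  have hCU : IsUnit (C U.det : K[X]) := isUnit_C.mpr (Ne.isUnit hUdet)
  have hdvd : (X : K[X]) ^ d ∣ P * C U.det := Dvd.intro _ hfin.symm
  exact (hCU.dvd_mul_right).mp hdvd

lemma aux_deg {K : Type*} [CommRing K] {m : ℕ} (M N : Matrix (Fin m) (Fin m) K) :
    ((M.map C) + (X : K[X]) • (N.map C)).det.natDegree ≤ m := by
  rw [Matrix.det_apply']
  apply Polynomial.natDegree_sum_le_of_forall_le
  intro σ _
  apply (Polynomial.natDegree_mul_le).trans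
  rw [Polynomial.natDegree_intCast, zero_add]
  apply (Polynomial.natDegree_prod_le _ _).trans
  have : ∀ i : Fin m, (((M.map C) + (X : K[X]) • (N.map C)) (σ i) i).natDegree ≤ 1 := by
    intro i
    simp only [Matrix.add_apply, Matrix.smul_apply, Matrix.map_apply, smul_eq_mul]
    apply (Polynomial.natDegree_add_le _ _).trans
    simp only [Polynomial.natDegree_C, max_le_iff]
    constructor
    · omega
    · apply (Polynomial.natDegree_mul_le).trans
      simp [Polynomial.natDegree_X_le]
  calc ∑ i : Fin m, (((M.map C) + (X : K[X]) • (N.map C)) (σ i) i).natDegree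
      ≤ ∑ _i : Fin m, 1 := Finset.sum_le_sum (fun i _ => this i)
    _ = m := by simp

lemma aux_mult {K : Type*} [Field K] {m : ℕ} (A B : Matrix (Fin m) (Fin m) K)
    (l : K) (hr : (A + l • B).rank ≤ 4)
    (hP : ((A.map C) + (X : K[X]) • (B.map C)).det ≠ 0) :
    m - 4 ≤ (((A.map C) + (X : K[X]) • (B.map C)).det).rootMultiplicity l := by
  set P : K[X] := ((A.map C) + (X : K[X]) • (B.map C)).det with hPdef
  set M : Matrix (Fin m) (Fin m) K := A + l • B with hM
  set φ : K[X] →ₐ[K] K[X] := Polynomial.aeval ((X : K[X]) + C l) with hφ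
  have hcomp : ∀ p : K[X], φ p = p.comp ((X : K[X]) + C l) := by
    intro p
    rw [hφ, Polynomial.comp, Polynomial.aeval_def, Polynomial.algebraMap_eq]
  have hQ : φ P = ((M.map C) + (X : K[X]) • (B.map C)).det := by
    rw [hPdef, AlgHom.map_det]
    congr 1
    refine Matrix.ext fun i j => ?_
    rw [AlgHom.mapMatrix_apply, Matrix.map_apply]
    have hent : (A.map C + (X : K[X]) • B.map C) i j = C (A i j) + X * C (B i j) := by
      simp [smul_eq_mul]
    have hent2 : ((M.map C) + (X : K[X]) • (B.map C)) i j = C (M i j) + X * C (B i j) := by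
      simp [smul_eq_mul]
    rw [hent, hent2, map_add, _root_.map_mul]
    simp only [hφ, Polynomial.aeval_C, Polynomial.aeval_X, Polynomial.algebraMap_eq, hM,
      Matrix.add_apply, Matrix.smul_apply, smul_eq_mul, C_add, C_mul]
    ring
  have hdvd1 : (X : K[X]) ^ (m - 4) ∣ φ P := by
    rw [hQ]
    refine dvd_trans (pow_dvd_pow _ ?_) (aux_dvd M B)
    omega
  set ψ : K[X] →ₐ[K] K[X] := Polynomial.aeval ((X : K[X]) - C l) with hψ
  have hcomp' : ∀ p : K[X], ψ p = p.comp ((X : K[X]) - C l) := by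
    intro p
    rw [hψ, Polynomial.comp, Polynomial.aeval_def, Polynomial.algebraMap_eq]
  have hdvd2 : ((X : K[X]) - C l) ^ (m - 4) ∣ P := by
    have := map_dvd ψ hdvd1
    rw [map_pow, hcomp' X, Polynomial.X_comp] at this
    rwa [hcomp' (φ P), hcomp P, Polynomial.comp_assoc, Polynomial.add_comp,
      Polynomial.X_comp, Polynomial.C_comp, sub_add_cancel, Polynomial.comp_X] at this
  rwa [Polynomial.le_rootMultiplicity_iff hP]

end AuxStmt18



noncomputable section

open Matrix NumberField IsDedekindDomain MvPolynomial

/-! ### Quadratic forms via Gram matrices -/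

section Forms

variable {R : Type*} [CommRing R] {m : ℕ}

/-- The quadratic form with (symmetric) Gram matrix `A`, evaluated at `x`. -/
def Qeval (A : Matrix (Fin m) (Fin m) R) (x : Fin m → R) : R := x ⬝ᵥ (A *ᵥ x)

/-- The `2 × m` Jacobian matrix of the pair of quadratic forms with Gram matrices `A` and `B`
at a point `x`: the rows are the gradients `2 • (A *ᵥ x)` and `2 • (B *ᵥ x)`. -/
def Jac (A B : Matrix (Fin m) (Fin m) R) (x : Fin m → R) : Matrix (Fin 2) (Fin m) R :=
  Matrix.of ![(2 : R) • (A *ᵥ x), (2 : R) • (B *ᵥ x)]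

/-- `x` is a point of the projective variety `{F = G = 0}`: it is nonzero and both quadratic
forms vanish on it. -/
def IsPt (A B : Matrix (Fin m) (Fin m) R) (x : Fin m → R) : Prop :=
  x ≠ 0 ∧ Qeval A x = 0 ∧ Qeval B x = 0

/-- `x` is a smooth point of the variety `{F = G = 0}`: it is a point and the Jacobian matrix
of `(F, G)` at `x` has rank `2`. -/
def IsSmoothPt (A B : Matrix (Fin m) (Fin m) R) (x : Fin m → R) : Prop :=
  IsPt A B x ∧ (Jac A B x).rank = 2

/-- The homogeneous quadratic polynomial attached to the Gram matrix `A`. -/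
def grampoly (A : Matrix (Fin m) (Fin m) R) : MvPolynomial (Fin m) R :=
  ∑ i, ∑ j, MvPolynomial.C (A i j) * (MvPolynomial.X i * MvPolynomial.X j)

/-- Base change of a Gram matrix along an algebra map. -/
def bc {k : Type*} [CommSemiring k] (K : Type*) [CommSemiring K] [Algebra k K]
    {n₁ n₂ : ℕ} (A : Matrix (Fin n₁) (Fin n₂) k) : Matrix (Fin n₁) (Fin n₂) K :=
  A.map (algebraMap k K)

/-- The top-left `3 × 3` block of a Gram matrix: the Gram matrix of the restriction
`F(x₀, x₁, x₂, 0, …, 0)` of the quadratic form to the plane `x₃ = ⋯ = 0`. -/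
def topLeft (h : 3 ≤ m) (A : Matrix (Fin m) (Fin m) R) : Matrix (Fin 3) (Fin 3) R :=
  A.submatrix (Fin.castLE h) (Fin.castLE h)

/-- The discriminant polynomial `P(λ) = det(F + λ G)` of a pencil of quadratic forms. -/
def discpoly (A B : Matrix (Fin m) (Fin m) R) : Polynomial R :=
  ((A.map Polynomial.C) + (Polynomial.X : Polynomial R) • (B.map Polynomial.C)).det

/-- The linear form `c₃ x₃ + c₄ x₄ + c₅ x₅` (as a covector in `R^6`) cutting out a hyperplane
of `ℙ⁵` containing the plane `Π : x₃ = x₄ = x₅ = 0`. -/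
def lvec (c : Fin 3 → R) : Fin 6 → R := ![0, 0, 0, c 0, c 1, c 2]

end Forms

/-! ### Geometric properties of the intersection of two quadrics -/

section Geometry

variable {k : Type*} [Field k] {m : ℕ} (kb : Type*) [Field kb] [Algebra k kb]

/-- The variety `X ⊂ ℙ^{m-1}` defined by the two quadratic forms with Gram matrices `A`, `B`
is geometrically integral: over an algebraic closure `kb` of `k`, the ideal generated by the
two quadratic polynomials is prime.  (For an intersection of two linearly independent quadrics
this is equivalent to integrality of the scheme `X ×_k k̄`.) -/
def GeomIntegral (A B : Matrix (Fin m) (Fin m) k) : Prop :=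
  (Ideal.span {grampoly (bc kb A), grampoly (bc kb B)}).IsPrime

/-- Every irreducible component of `X ×_k k̄` has dimension `m - 3` (i.e. codimension `2` in
`ℙ^{m-1}`), expressed by saying that the affine cone over `X ×_k k̄` has Krull dimension
`m - 2`. -/
def PureCodimTwo (A B : Matrix (Fin m) (Fin m) k) : Prop :=
  ringKrullDim (MvPolynomial (Fin m) kb ⧸
    (Ideal.span {grampoly (bc kb A), grampoly (bc kb B)})) = (m - 2 : ℕ)

/-- `X` is non-conical: there is no point `p ∈ ℙ^{m-1}(k̄)` such that every line through `p`
and a point of `X(k̄)` is contained in `X(k̄)`. -/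
def NonConical (A B : Matrix (Fin m) (Fin m) k) : Prop :=
  ¬ ∃ p : Fin m → kb, p ≠ 0 ∧ ∀ x : Fin m → kb,
      IsPt (bc kb A) (bc kb B) x →
      ∀ s t : kb, Qeval (bc kb A) (s • p + t • x) = 0 ∧ Qeval (bc kb B) (s • p + t • x) = 0

/-- `X` contains a conic defined over `k`: there is a `2`-plane `Π ⊂ ℙ^{m-1}_k`, given as the
projectivization of the image of an injective linear map `ι : k³ → k^m`, such that the
restrictions of `F` and `G` to `Π` span a line in the space of ternary quadratic forms;
i.e. `X ∩ Π` is the plane curve of degree `2` defined by a single nonzero ternary quadratic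
form `q`. -/
def ContainsConic (A B : Matrix (Fin m) (Fin m) k) : Prop :=
  ∃ ι : Matrix (Fin m) (Fin 3) k, ι.rank = 3 ∧
    ∃ q : Matrix (Fin 3) (Fin 3) k, q.IsSymm ∧ q ≠ 0 ∧
      ∃ a b : k, ¬(a = 0 ∧ b = 0) ∧ ιᵀ * A * ι = a • q ∧ ιᵀ * B * ι = b • q

/-- `X` contains a smooth conic defined over `k`: as in `ContainsConic`, with the ternary
quadratic form `q` moreover of rank `3`, so that `X ∩ Π` is a smooth geometrically integral
plane curve of degree `2`. -/
def ContainsSmoothConic (A B : Matrix (Fin m) (Fin m) k) : Prop :=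
  ∃ ι : Matrix (Fin m) (Fin 3) k, ι.rank = 3 ∧
    ∃ q : Matrix (Fin 3) (Fin 3) k, q.IsSymm ∧ q.rank = 3 ∧
      ∃ a b : k, ¬(a = 0 ∧ b = 0) ∧ ιᵀ * A * ι = a • q ∧ ιᵀ * B * ι = b • q

/-- `X = {F = G = 0}` is a smooth intersection of two quadrics: at every point of `X` over the
algebraic closure `kb`, the `2 × m` Jacobian matrix of `(F, G)` has rank `2`. -/
def IsSmoothIntersection (A B : Matrix (Fin m) (Fin m) k) : Prop :=
  ∀ x : Fin m → kb, IsPt (bc kb A) (bc kb B) x → (Jac (bc kb A) (bc kb B) x).rank = 2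

/-- The hyperplane `H = {x | ℓ ⬝ᵥ x = 0}` meets `X = {F = G = 0}` transversally at the smooth
point `P`: `P ∈ H` and `H` does not contain the projective tangent space of `X` at `P`,
i.e. `ℓ` is not a linear combination of the gradients of `F` and `G` at `P`
(the rows of the Jacobian). -/
def TransversalAt {K : Type*} [Field K] (A B : Matrix (Fin m) (Fin m) K) (P ℓ : Fin m → K) :
    Prop :=
  ℓ ⬝ᵥ P = 0 ∧ ℓ ∉ Submodule.span K {(2 : K) • (A *ᵥ P), (2 : K) • (B *ᵥ P)}

end Geometry

/-! ### Places of a number field and their completions -/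

/-- The places of a number field `k`: the infinite (archimedean) places together with the
finite places, i.e. the nonzero prime ideals of the ring of integers of `k`. -/
inductive Place (k : Type*) [Field k] [NumberField k] where
  | infinite : NumberField.InfinitePlace k → Place k
  | finite : IsDedekindDomain.HeightOneSpectrum (𝓞 k) → Place k

variable {k : Type*} [Field k] [NumberField k]

/-- The completion `k_v` of a number field `k` at a place `v`. -/
def Place.Completion : Place k → Type _
  | .infinite v => v.1.Completion
  | .finite v => v.adicCompletion k

instance : (v : Place k) → Field v.Completion
  | .infinite v => inferInstanceAs (Field v.1.Completion)
  | .finite v => inferInstanceAs (Field (v.adicCompletion k))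

instance : (v : Place k) → Algebra k v.Completion
  | .infinite v => inferInstanceAs (Algebra k v.1.Completion)
  | .finite v => inferInstanceAs (Algebra k (v.adicCompletion k))

instance : (v : Place k) → TopologicalSpace v.Completion
  | .infinite v => inferInstanceAs (TopologicalSpace v.1.Completion)
  | .finite v => inferInstanceAs (TopologicalSpace (v.adicCompletion k))

section Local

variable {m : ℕ}

/-- `X` has a smooth `k_v`-point at every place `v` of `k`. -/
def SmoothPointsEverywhereLocally (A B : Matrix (Fin m) (Fin m) k) : Prop :=
  ∀ v : Place k, ∃ x : Fin m → v.Completion, IsSmoothPt (bc v.Completion A) (bc v.Completion B) x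

/-- `X` has a `k_v`-point at every place `v` of `k`. -/
def PointsEverywhereLocally (A B : Matrix (Fin m) (Fin m) k) : Prop :=
  ∀ v : Place k, ∃ x : Fin m → v.Completion, IsPt (bc v.Completion A) (bc v.Completion B) x

/-- Weak approximation for smooth points:  the set of smooth `k`-points of `X` is dense in
`∏_{v ∈ S} X_sm(k_v)` for every finite set `S` of places, where each `X_sm(k_v)` carries the
quotient of the `v`-adic topology on `k_v^m \ {0}`.  Equivalently (as the quotient maps by
scaling are open): for every choice of smooth `k_v`-points `x_v` and open neighbourhoods `U_v`
of `x_v` in `k_v^m`, there is a smooth `k`-point `y` which, after scaling by some nonzero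
`c_v ∈ k_v`, lies in `U_v` for each `v ∈ S`. -/
def SmoothWeakApproximation (A B : Matrix (Fin m) (Fin m) k) : Prop :=
  ∀ S : Finset (Place k),
  ∀ x : (v : Place k) → v ∈ S → (Fin m → v.Completion),
    (∀ v hv, IsSmoothPt (bc v.Completion A) (bc v.Completion B) (x v hv)) →
  ∀ U : (v : Place k) → v ∈ S → Set (Fin m → v.Completion),
    (∀ v hv, IsOpen (U v hv)) → (∀ v hv, x v hv ∈ U v hv) →
  ∃ y : Fin m → k, IsSmoothPt A B y ∧
    ∀ v hv, ∃ c : v.Completion, c ≠ 0 ∧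
      (c • fun i => algebraMap k v.Completion (y i)) ∈ U v hv

/-- Weak approximation:  the set of `k`-points of `X` is dense in `∏_{v ∈ S} X(k_v)` for every
finite set `S` of places of `k` (topologies as in `SmoothWeakApproximation`). -/
def WeakApproximation (A B : Matrix (Fin m) (Fin m) k) : Prop :=
  ∀ S : Finset (Place k),
  ∀ x : (v : Place k) → v ∈ S → (Fin m → v.Completion),
    (∀ v hv, IsPt (bc v.Completion A) (bc v.Completion B) (x v hv)) →
  ∀ U : (v : Place k) → v ∈ S → Set (Fin m → v.Completion),
    (∀ v hv, IsOpen (U v hv)) → (∀ v hv, x v hv ∈ U v hv) →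
  ∃ y : Fin m → k, IsPt A B y ∧
    ∀ v hv, ∃ c : v.Completion, c ≠ 0 ∧
      (c • fun i => algebraMap k v.Completion (y i)) ∈ U v hv

end Local

/-- Let `k` be a field of characteristic `0`, `n ≥ 6`, and `F`, `G`
quadratic forms in `n + 1` variables over `k` with `rank F = n + 1`.  Then
`{λ ∈ k̄ : rank(F + λG) ≤ 4}` has at most two elements, and if it has exactly two then
`n = 6` or `n = 7`. -/
theorem statement_18 (k : Type*) [Field k] [CharZero k] (n : ℕ) (hn : 6 ≤ n)
    (A B : Matrix (Fin (n + 1)) (Fin (n + 1)) k) (hAs : A.IsSymm) (hBs : B.IsSymm)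
    (hF : A.rank = n + 1) :
    {l : AlgebraicClosure k |
        (bc (AlgebraicClosure k) A + l • bc (AlgebraicClosure k) B).rank ≤ 4}.encard ≤ 2 ∧
      ({l : AlgebraicClosure k |
          (bc (AlgebraicClosure k) A + l • bc (AlgebraicClosure k) B).rank ≤ 4}.encard = 2 →
        n = 6 ∨ n = 7) := by
  classical
  set K := AlgebraicClosure k
  set A' : Matrix (Fin (n + 1)) (Fin (n + 1)) K := bc K A with hA'
  set B' : Matrix (Fin (n + 1)) (Fin (n + 1)) K := bc K B with hB'
  set S : Set K := {l : K | (A' + l • B').rank ≤ 4} with hS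
  set P : Polynomial K :=
    ((A'.map Polynomial.C) + (Polynomial.X : Polynomial K) • (B'.map Polynomial.C)).det
    with hPdef
  -- P is nonzero
  have hdetA : A.det ≠ 0 := aux_det_ne_zero A hF
  have hdetA' : A'.det ≠ 0 := by
    have : A'.det = algebraMap k K A.det := by
      rw [hA', RingHom.map_det, RingHom.mapMatrix_apply]; rfl
    rw [this]
    intro hz
    exact hdetA ((algebraMap k K).injective (by rw [hz, map_zero]))
  have h0 : Polynomial.eval 0 P = A'.det := by
    rw [hPdef, ← Polynomial.coe_evalRingHom, RingHom.map_det]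
    congr 1
    refine Matrix.ext fun i j => ?_
    simp [smul_eq_mul]
  have hP : P ≠ 0 := by
    intro h
    rw [h, Polynomial.eval_zero] at h0
    exact hdetA' h0.symm
  -- each element of S is a root of multiplicity ≥ n - 3
  have hmult : ∀ l ∈ S, n - 3 ≤ P.rootMultiplicity l := by
    intro l hl
    have := aux_mult A' B' l hl (hPdef ▸ hP)
    rw [← hPdef] at this
    omega
  have hkey : ∀ t : Finset K, (∀ a ∈ t, a ∈ S) → t.card * (n - 3) ≤ n + 1 := by
    intro t ht
    have h1 := aux_card_mul_le P hP t (n - 3) (by omega) (fun a ha => hmult a (ht a ha))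
    have h2 : P.natDegree ≤ n + 1 := hPdef ▸ aux_deg A' B'
    omega
  constructor
  · by_contra hcon
    push_neg at hcon
    have h3 : 3 ≤ S.encard := Order.add_one_le_of_lt hcon
    obtain ⟨t, hts, ht3⟩ := Set.exists_subset_encard_eq h3
    rw [Set.encard_eq_three] at ht3
    obtain ⟨a, b, c, hab, hac, hbc, rfl⟩ := ht3
    have hcard : ({a, b, c} : Finset K).card = 3 := by
      rw [Finset.card_insert_of_notMem (by simp [hab, hac]),
        Finset.card_insert_of_notMem (by simp [hbc]), Finset.card_singleton]
    have := hkey {a, b, c} (fun x hx => by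
      apply hts
      simpa using hx)
    rw [hcard] at this
    omega
  · intro h2
    rw [Set.encard_eq_two] at h2
    obtain ⟨a, b, hab, hSab⟩ := h2
    have hcard : ({a, b} : Finset K).card = 2 := by
      rw [Finset.card_insert_of_notMem (by simp [hab]), Finset.card_singleton]
    have := hkey {a, b} (fun x hx => by
      rw [hSab]
      simpa using hx)
    rw [hcard] at this
    omega
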